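/- Classical case of the main theorem: a bounded linear operator T on ℓ²(ℤ) has a Toeplitz matrix — i.e. ⟨T e_j, e_i⟩ = ⟨T e_{j−1}, e_{i−1}⟩ for all i, j ∈ ℤ — if and only if T lies in the σ-closure of the set of convolution operators by finitely supported sequences, i.e. if and only if for every ε > 0 and every finite set F ⊆ ℤ there exists a finitely supported function f : ℤ → ℂ such that ‖T e_j − Λ_f e_j‖ < ε for all j ∈ F. -/

import Mathlib

open scoped ComplexConjugate ENNReal

noncomputable section

/-- The Hilbert space `ℓ²(ℤ)` of square-summable complex sequences indexed by `ℤ`. -/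
abbrev H2 : Type := lp (fun _ : ℤ => ℂ) 2

/-- The standard orthonormal basis vector `e j` of `ℓ²(ℤ)`. -/
def e (j : ℤ) : H2 := lp.single 2 j 1

/-- `IsConv f L` says that `L` is the convolution operator `Λ_f` on `ℓ²(ℤ)`,
i.e. `(L x)(l) = ∑_{k ∈ ℤ} f (l - k) * x k`. -/
def IsConv (f : ℤ → ℂ) (L : H2 →L[ℂ] H2) : Prop :=
  ∀ (x : H2) (l : ℤ), L x l = ∑ᶠ k : ℤ, f (l - k) * x k

/-- A bounded operator on `ℓ²(ℤ)` is Toeplitz if `⟨T e_j, e_i⟩ = ⟨T e_{j-1}, e_{i-1}⟩`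
for all `i, j ∈ ℤ`. -/
def IsToeplitz (T : H2 →L[ℂ] H2) : Prop :=
  ∀ i j : ℤ, (inner ℂ (e i) (T (e j)) : ℂ) = inner ℂ (e (i - 1)) (T (e (j - 1)))

-- shift: (shift n x) l = x (l - n)
lemma memℓp_shift (n : ℤ) (x : H2) : Memℓp (fun l : ℤ => x (l - n)) 2 := by
  have hx : Memℓp (⇑x) 2 := lp.memℓp x
  rw [memℓp_gen_iff (by norm_num)] at hx ⊢
  exact ((Equiv.subRight n).summable_iff (f := fun m : ℤ => ‖x m‖ ^ (2:ℝ≥0∞).toReal)).2 hx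

def shiftL (n : ℤ) : H2 →ₗ[ℂ] H2 where
  toFun x := ⟨fun l : ℤ => x (l - n), memℓp_shift n x⟩
  map_add' x y := by
    apply lp.ext
    funext l
    simp [lp.coeFn_add]; rfl
  map_smul' c x := by
    apply lp.ext
    funext l
    simp [lp.coeFn_smul]

@[simp] lemma shiftL_apply (n : ℤ) (x : H2) (l : ℤ) : shiftL n x l = x (l - n) := rfl

lemma norm_shiftL (n : ℤ) (x : H2) : ‖shiftL n x‖ = ‖x‖ := by
  rw [lp.norm_eq_tsum_rpow (by norm_num) (shiftL n x), lp.norm_eq_tsum_rpow (by norm_num) x]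
  congr 1
  exact (Equiv.subRight n).tsum_eq (f := fun m : ℤ => ‖x m‖ ^ (2:ℝ≥0∞).toReal)

def shift (n : ℤ) : H2 →L[ℂ] H2 :=
  (shiftL n).mkContinuous 1 (fun x => by rw [norm_shiftL]; simp)

@[simp] lemma shift_apply (n : ℤ) (x : H2) (l : ℤ) : shift n x l = x (l - n) := rfl

lemma norm_shift (n : ℤ) (x : H2) : ‖shift n x‖ = ‖x‖ := norm_shiftL n x


def conv (f : ℤ → ℂ) (S : Finset ℤ) : H2 →L[ℂ] H2 := ∑ n ∈ S, f n • shift n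

lemma conv_apply (f : ℤ → ℂ) (S : Finset ℤ) (x : H2) (l : ℤ) :
    conv f S x l = ∑ n ∈ S, f n * x (l - n) := by
  simp only [conv, ContinuousLinearMap.sum_apply, ContinuousLinearMap.smul_apply]
  rw [lp.coeFn_sum, Finset.sum_apply]
  simp [lp.coeFn_smul]

lemma isConv_conv (f : ℤ → ℂ) (S : Finset ℤ) (hS : Function.support f ⊆ S) :
    IsConv f (conv f S) := by
  intro x l
  rw [conv_apply]
  have hsub : Function.support (fun k : ℤ => f (l - k) * x k) ⊆ ↑(S.image fun n => l - n) := by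
    intro k hk
    have hf : f (l - k) ≠ 0 := fun h => hk (by simp [h])
    have : l - k ∈ S := hS hf
    simp only [Finset.coe_image, Set.mem_image, Finset.mem_coe]
    exact ⟨l - k, this, by omega⟩
  rw [finsum_eq_finset_sum_of_support_subset _ hsub,
    Finset.sum_image (by intro a _ b _ h; have h' : l - a = l - b := h; omega)]
  exact Finset.sum_congr rfl fun n _ => by rw [sub_sub_cancel]

lemma e_apply (j i : ℤ) : e j i = if i = j then 1 else 0 := by
  rw [e, lp.single_apply]
  split_ifs with h
  · subst h; simp
  · simp [h]

lemma conv_e (f : ℤ → ℂ) (S : Finset ℤ) (j l : ℤ) :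
    conv f S (e j) l = if l - j ∈ S then f (l - j) else 0 := by
  rw [conv_apply]
  have h : ∀ n, f n * e j (l - n) = if n = l - j then f n else 0 := by
    intro n
    rw [e_apply]
    split_ifs with h1 h2 h2
    · ring
    · omega
    · omega
    · ring
  simp_rw [h]
  exact Finset.sum_ite_eq' S (l - j) f


lemma inner_e (i : ℤ) (y : H2) : (inner ℂ (e i) y : ℂ) = y i := by
  rw [e, lp.inner_single_left]
  simp [RCLike.inner_apply]

/-- Classical case of the main theorem: a bounded operator `T` on `ℓ²(ℤ)` has a
Toeplitz matrix if and only if it lies in the σ-closure of the set of convolution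
operators by finitely supported sequences. -/
theorem stmt6 (T : H2 →L[ℂ] H2) :
    IsToeplitz T ↔
      ∀ ε > (0 : ℝ), ∀ F : Finset ℤ, ∃ f : ℤ → ℂ, (Function.support f).Finite ∧
        ∃ L : H2 →L[ℂ] H2, IsConv f L ∧ ∀ j ∈ F, ‖T (e j) - L (e j)‖ < ε := by
  constructor
  · intro hT ε hε F
    have hT' : ∀ i j : ℤ, T (e j) i = T (e (j - 1)) (i - 1) := by
      intro i j
      have := hT i j
      rwa [inner_e, inner_e] at this
    have hkey : ∀ j i : ℤ, T (e j) i = T (e 0) (i - j) := by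
      intro j
      induction j using Int.induction_on with
      | zero => intro i; rw [sub_zero]
      | succ k ih =>
        intro i
        have h1 := hT' i (k + 1)
        have h2 : ((k : ℤ) + 1) - 1 = k := by ring
        rw [h2] at h1
        rw [h1, ih]
        have h3 : i - 1 - (k : ℤ) = i - ((k : ℤ) + 1) := by ring
        rw [h3]
      | pred k ih =>
        intro i
        have h1 := hT' (i + 1) (-(k : ℤ))
        have h2 : (i : ℤ) + 1 - 1 = i := by ring
        rw [h2] at h1
        rw [← h1, ih]
        have h3 : i + 1 - -(k : ℤ) = i - (-(k : ℤ) - 1) := by ring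
        rw [h3]
    have hTshift : ∀ j : ℤ, T (e j) = shift j (T (e 0)) := by
      intro j
      apply lp.ext
      funext l
      rw [shift_apply, hkey j l]
    obtain ⟨S, hS⟩ : ∃ S : Finset ℤ, ‖(∑ i ∈ S, lp.single 2 i (T (e 0) i)) - T (e 0)‖ < ε := by
      have h := lp.hasSum_single (E := fun _ : ℤ => ℂ) (p := 2) (by norm_num) (T (e 0))
      obtain ⟨S, hS⟩ := (Metric.tendsto_nhds.mp h ε hε).exists
      exact ⟨S, by simpa [dist_eq_norm] using hS⟩
    set f : ℤ → ℂ := fun n => if n ∈ S then T (e 0) n else 0 with hf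
    have hsupp : Function.support f ⊆ ↑S := by
      intro n hn
      simp only [Function.mem_support, hf] at hn
      by_contra hns
      exact hn (if_neg (by simpa using hns))
    refine ⟨f, S.finite_toSet.subset hsupp, conv f S, isConv_conv f S hsupp, ?_⟩
    have hL0 : conv f S (e 0) = ∑ i ∈ S, lp.single 2 i (T (e 0) i) := by
      apply lp.ext
      funext l
      rw [conv_e]
      simp only [lp.single_apply, lp.coeFn_sum, Finset.sum_apply, Finset.sum_dite_eq, Pi.single_apply, Finset.sum_ite_eq, Finset.sum_ite_eq']
      rw [sub_zero]
      by_cases hl : l ∈ S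
      · rw [if_pos hl, if_pos hl, hf]
        simp [hl]
      · rw [if_neg hl, if_neg hl]
    have hLshift : ∀ j : ℤ, conv f S (e j) = shift j (conv f S (e 0)) := by
      intro j
      apply lp.ext
      funext l
      rw [shift_apply, conv_e, conv_e]
      norm_num
    intro j _
    rw [hTshift j, hLshift j, ← map_sub, norm_shift, ← norm_sub_rev]
    rwa [hL0]
  · intro h i j
    rw [inner_e, inner_e]
    by_contra hne
    set d : ℂ := T (e j) i - T (e (j - 1)) (i - 1) with hd
    have hdne : d ≠ 0 := sub_ne_zero.mpr hne
    have hdpos : 0 < ‖d‖ := norm_pos_iff.mpr hdne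
    obtain ⟨f, -, L, hL, hclose⟩ := h (‖d‖ / 3) (by linarith) {j, j - 1}
    have hentry : ∀ j' : ℤ, ∀ i' : ℤ, L (e j') i' = f (i' - j') := by
      intro j' i'
      rw [hL (e j') i', finsum_eq_single _ j' ?_]
      · rw [e_apply, if_pos rfl, mul_one]
      · intro k hk
        rw [e_apply, if_neg hk, mul_zero]
    have hbound : ∀ j' i' : ℤ, ‖T (e j') - L (e j')‖ < ‖d‖ / 3 →
        ‖T (e j') i' - L (e j') i'‖ < ‖d‖ / 3 := by
      intro j' i' hj'
      calc ‖T (e j') i' - L (e j') i'‖ = ‖(T (e j') - L (e j')) i'‖ := by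
            rw [lp.coeFn_sub, Pi.sub_apply]
        _ ≤ ‖T (e j') - L (e j')‖ := lp.norm_apply_le_norm (by norm_num) _ i'
        _ < ‖d‖ / 3 := hj'
    have h1 := hbound j i (hclose j (by simp))
    have h2 := hbound (j - 1) (i - 1) (hclose (j - 1) (by simp))
    rw [hentry j i] at h1
    have hij : (i - 1) - (j - 1) = i - j := by ring
    rw [hentry (j - 1) (i - 1), hij] at h2
    have hsplit : d = (T (e j) i - f (i - j)) - (T (e (j - 1)) (i - 1) - f (i - j)) := by
      rw [hd]; ring
    have hle : ‖d‖ ≤ ‖(T (e j) i : ℂ) - f (i - j)‖ + ‖(T (e (j - 1)) (i - 1) : ℂ) - f (i - j)‖ := by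
      rw [hsplit]; exact norm_sub_le _ _
    linarith
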